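/- Let Γ be a group generated by a finite symmetric set S = S⁻¹ ⊆ Γ. Then for every finite nonempty subset D ⊆ Γ and every integer r ≥ 1, one has |∂_S D| · ( r·γ_S(r) − Σ_{k=0}^{r−1} γ_S(k) ) ≥ |D| · ( γ_S(r) − |D| ). -/

import Mathlib

open scoped Pointwise

variable {G : Type*} [Group G] [DecidableEq G]

/-- The ball of radius `r` in the word metric: elements of `G` expressible as
a product of at most `r` elements of `S`. -/
def wordBall (S : Finset G) : ℕ → Finset G
  | 0 => {1}
  | r + 1 => wordBall S r ∪ S * wordBall S r

/-- The inner boundary of a finite set `D` with respect to the generating set `S`. -/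
def innerBoundary (S D : Finset G) : Finset G :=
  D.filter fun x => ∃ s ∈ S, s * x ∉ D

lemma wordBall_mono (S : Finset G) : Monotone (wordBall S) := by
  apply monotone_nat_of_le_succ
  intro n
  rw [show wordBall S (n + 1) = wordBall S n ∪ S * wordBall S n from rfl]
  exact Finset.subset_union_left

lemma sdiff_smul_card_le (S D : Finset G) (hsymm : ∀ s ∈ S, s⁻¹ ∈ S) :
    ∀ k, ∀ g ∈ wordBall S k, (D \ g • D).card ≤ k * (innerBoundary S D).card := by
  intro k
  induction k with
  | zero =>
    intro g hg
    rw [show wordBall S 0 = {1} from rfl, Finset.mem_singleton] at hg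
    simp [hg]
  | succ n ih =>
    intro g hg
    rw [show wordBall S (n + 1) = wordBall S n ∪ S * wordBall S n from rfl,
      Finset.mem_union] at hg
    rcases hg with hg | hg
    · exact (ih g hg).trans (Nat.mul_le_mul_right _ (Nat.le_succ n))
    · obtain ⟨s, hs, h, hh, rfl⟩ := Finset.mem_mul.1 hg
      have hstep : (D \ s • D).card ≤ (innerBoundary S D).card := by
        apply Finset.card_le_card
        intro x hx
        rw [Finset.mem_sdiff] at hx
        rw [innerBoundary, Finset.mem_filter]
        refine ⟨hx.1, s⁻¹, hsymm s hs, fun hmem => hx.2 ?_⟩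
        have : x ∈ s • (s⁻¹ * x) • ({1} : Finset G) := by
          simp [smul_eq_mul]
        refine Finset.mem_smul_finset.2 ⟨s⁻¹ * x, hmem, ?_⟩
        simp [smul_eq_mul]
      have htri : D \ (s * h) • D ⊆ (D \ s • D) ∪ (s • D \ (s * h) • D) :=
        sdiff_triangle D (s • D) ((s * h) • D)
      have h2 : (s • D \ (s * h) • D).card ≤ n * (innerBoundary S D).card := by
        have : s • D \ (s * h) • D = s • (D \ h • D) := by
          rw [mul_smul, Finset.smul_finset_sdiff]
        rw [this, Finset.card_smul_finset]
        exact ih h hh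
      calc (D \ (s * h) • D).card ≤ ((D \ s • D) ∪ (s • D \ (s * h) • D)).card :=
            Finset.card_le_card htri
        _ ≤ (D \ s • D).card + (s • D \ (s * h) • D).card := Finset.card_union_le _ _
        _ ≤ (innerBoundary S D).card + n * (innerBoundary S D).card := by
            exact Nat.add_le_add hstep h2
        _ = (n + 1) * (innerBoundary S D).card := by ring

theorem stmt0 (S : Finset G)
    (hsymm : ∀ s ∈ S, s⁻¹ ∈ S) (hgen : Subgroup.closure (S : Set G) = ⊤)
    (D : Finset G) (hD : D.Nonempty) (r : ℕ) (hr : 1 ≤ r) :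
    (D.card : ℤ) * ((wordBall S r).card - (D.card : ℤ)) ≤
      ((innerBoundary S D).card : ℤ) *
        ((r : ℤ) * (wordBall S r).card - ∑ k ∈ Finset.range r, ((wordBall S k).card : ℤ)) := by
  set B := wordBall S r with hB
  set bd := (innerBoundary S D).card with hbd
  -- per-element count of balls not containing g
  set m : G → ℕ := fun g => ((Finset.range r).filter (fun k => g ∉ wordBall S k)).card with hm
  -- key per-g bound
  have key : ∀ g ∈ B, (D \ g • D).card ≤ m g * bd := by
    intro g hg
    have hex : ∃ k, g ∈ wordBall S k := ⟨r, hg⟩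
    set k₀ := Nat.find hex with hk₀
    have hk₀r : k₀ ≤ r := Nat.find_min' hex hg
    have hfilter : (Finset.range r).filter (fun k => g ∉ wordBall S k) = Finset.range k₀ := by
      ext k
      simp only [Finset.mem_filter, Finset.mem_range]
      constructor
      · rintro ⟨hkr, hk⟩
        by_contra hlt
        push_neg at hlt
        exact hk (wordBall_mono S hlt (Nat.find_spec hex))
      · intro hk
        exact ⟨lt_of_lt_of_le hk hk₀r, Nat.find_min hex hk⟩
    have hmg : m g = k₀ := by rw [hm]; simp [hfilter]
    rw [hmg]
    exact sdiff_smul_card_le S D hsymm k₀ g (Nat.find_spec hex)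
  -- double counting: ∑ |D ∩ gD| ≤ |D|^2
  have hdc : ∑ g ∈ B, (D ∩ g • D).card ≤ D.card * D.card := by
    have : ∑ g ∈ B, (D ∩ g • D).card = ∑ x ∈ D, (B.filter (fun g => x ∈ g • D)).card := by
      simp only [Finset.card_eq_sum_ones]
      rw [Finset.sum_comm' (s := B) (t := fun g => D ∩ g • D) (t' := D)
        (s' := fun x => B.filter (fun g => x ∈ g • D))]
      intro g x
      simp only [Finset.mem_inter, Finset.mem_filter]
      tauto
    rw [this]
    calc ∑ x ∈ D, (B.filter (fun g => x ∈ g • D)).card ≤ ∑ _x ∈ D, D.card := by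
          apply Finset.sum_le_sum
          intro x hx
          apply Finset.card_le_card_of_injOn (fun g => g⁻¹ * x)
          · intro g hg
            simp only [Finset.mem_coe] at hg ⊢
            rw [Finset.mem_filter] at hg
            obtain ⟨d, hd, hdx⟩ := Finset.mem_smul_finset.1 hg.2
            rw [smul_eq_mul] at hdx
            rwa [← hdx, inv_mul_cancel_left]
          · intro a _ b _ hab
            have hab' : a⁻¹ * x = b⁻¹ * x := hab
            exact inv_injective (mul_right_cancel hab')
      _ = D.card * D.card := by rw [Finset.sum_const, smul_eq_mul]
  -- lower bound for the sum
  have hlow : (B.card * D.card : ℕ) ≤ (∑ g ∈ B, (D \ g • D).card) + D.card * D.card := by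
    have hsplit : ∀ g : G, D.card = (D \ g • D).card + (D ∩ g • D).card := by
      intro g
      rw [Finset.card_sdiff_add_card_inter]
    calc (B.card * D.card : ℕ) = ∑ g ∈ B, D.card := by rw [Finset.sum_const, smul_eq_mul]
      _ = (∑ g ∈ B, (D \ g • D).card) + ∑ g ∈ B, (D ∩ g • D).card := by
          rw [← Finset.sum_add_distrib]; exact Finset.sum_congr rfl fun g _ => hsplit g
      _ ≤ (∑ g ∈ B, (D \ g • D).card) + D.card * D.card := Nat.add_le_add_left hdc _
  -- upper bound for the sum
  have hup : (∑ g ∈ B, (D \ g • D).card) ≤ bd * ∑ k ∈ Finset.range r, (B.card - (wordBall S k).card) := by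
    calc (∑ g ∈ B, (D \ g • D).card) ≤ ∑ g ∈ B, m g * bd := Finset.sum_le_sum key
      _ = (∑ g ∈ B, m g) * bd := by rw [Finset.sum_mul]
      _ = (∑ k ∈ Finset.range r, (B.card - (wordBall S k).card)) * bd := by
          congr 1
          have : ∑ g ∈ B, m g =
              ∑ k ∈ Finset.range r, (B.filter (fun g => g ∉ wordBall S k)).card := by
            simp only [hm, Finset.card_eq_sum_ones]
            rw [Finset.sum_comm' (s := B)
              (t := fun g => (Finset.range r).filter (fun k => g ∉ wordBall S k))
              (t' := Finset.range r)
              (s' := fun k => B.filter (fun g => g ∉ wordBall S k))]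
            intro g k
            simp only [Finset.mem_filter]
            tauto
          rw [this]
          apply Finset.sum_congr rfl
          intro k hk
          rw [Finset.mem_range] at hk
          have hsub : wordBall S k ⊆ B := wordBall_mono S hk.le
          have : B.filter (fun g => g ∉ wordBall S k) = B \ wordBall S k := by
            ext g; simp [Finset.mem_sdiff]
          rw [this, Finset.card_sdiff_of_subset hsub]
      _ = bd * ∑ k ∈ Finset.range r, (B.card - (wordBall S k).card) := by ring
  -- cast to ℤ
  have hcast : ((∑ k ∈ Finset.range r, (B.card - (wordBall S k).card) : ℕ) : ℤ) =
      (r : ℤ) * B.card - ∑ k ∈ Finset.range r, ((wordBall S k).card : ℤ) := by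
    rw [Nat.cast_sum]
    have : ∀ k ∈ Finset.range r, ((B.card - (wordBall S k).card : ℕ) : ℤ) =
        (B.card : ℤ) - ((wordBall S k).card : ℤ) := by
      intro k hk
      rw [Finset.mem_range] at hk
      exact Nat.cast_sub (Finset.card_le_card (wordBall_mono S hk.le))
    rw [Finset.sum_congr rfl this, Finset.sum_sub_distrib, Finset.sum_const,
      Finset.card_range, nsmul_eq_mul]
  have hlowZ : (B.card : ℤ) * D.card ≤ (∑ g ∈ B, ((D \ g • D).card : ℤ)) + D.card * D.card := by
    have := hlow
    zify at this
    exact this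
  have hupZ : (∑ g ∈ B, ((D \ g • D).card : ℤ)) ≤
      (bd : ℤ) * ((r : ℤ) * B.card - ∑ k ∈ Finset.range r, ((wordBall S k).card : ℤ)) := by
    have := hup
    zify at this
    calc (∑ g ∈ B, ((D \ g • D).card : ℤ)) ≤
        (bd : ℤ) * ∑ k ∈ Finset.range r, ((B.card - (wordBall S k).card : ℕ) : ℤ) := this
      _ = (bd : ℤ) * ((r : ℤ) * B.card - ∑ k ∈ Finset.range r, ((wordBall S k).card : ℤ)) := by
          rw [← Nat.cast_sum, hcast]
  nlinarith [hlowZ, hupZ]
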